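/- For 0 < σᵣ < √2 and σᵢ > 0, the sequence g₀ = 0, g_{t+1} = h₂(g_t), where h₂ is the ReLU off-diagonal kernel map with equilibrium a = σᵢ²/(2−σᵣ²), is increasing and converges to a. Consequently the stability metric L_t = 2(a − g_t) converges to 0, i.e., the ReLU recurrent kernel is stable whenever σᵣ < √2. -/

import Mathlib

open Real Set Filter

lemma theta_cos_le_sin {θ : ℝ} (h0 : 0 ≤ θ) (h1 : θ < π / 2) : θ * Real.cos θ ≤ Real.sin θ := by
  rcases eq_or_lt_of_le h0 with h | h
  · simp [← h]
  · have hc : 0 < Real.cos θ := Real.cos_pos_of_mem_Ioo ⟨by linarith [Real.pi_pos], h1⟩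
    have ht := Real.lt_tan h h1
    rw [Real.tan_eq_sin_div_cos, lt_div_iff₀ hc] at ht
    linarith

theorem stmt_17 (σr σi : ℝ) (hr : 0 < σr) (hr2 : σr < Real.sqrt 2) (hi : 0 < σi)
    (a : ℝ) (ha : a = σi ^ 2 / (2 - σr ^ 2))
    (h₂ : ℝ → ℝ)
    (hdef : ∀ x, h₂ x = 1 / (2 * π) *
      ((σr ^ 2 * x + σi ^ 2) *
          Real.arccos (-((σr ^ 2 * x + σi ^ 2) / (σr ^ 2 * a + σi ^ 2))) +
        Real.sqrt ((σr ^ 2 * a + σi ^ 2) ^ 2 - (σr ^ 2 * x + σi ^ 2) ^ 2)))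
    (g : ℕ → ℝ) (hg0 : g 0 = 0) (hgs : ∀ t, g (t + 1) = h₂ (g t)) :
    Monotone g ∧ Filter.Tendsto g Filter.atTop (nhds a) ∧
      Filter.Tendsto (fun t => 2 * (a - g t)) Filter.atTop (nhds 0) := by
  have hπ : (0:ℝ) < π := Real.pi_pos
  have hσ2 : σr ^ 2 < 2 := by
    have : σr ^ 2 < (Real.sqrt 2) ^ 2 := by
      apply pow_lt_pow_left₀ hr2 hr.le; norm_num
    rwa [Real.sq_sqrt (by norm_num : (0:ℝ) ≤ 2)] at this
  have ha0 : 0 < a := by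
    have h2 : (0:ℝ) < 2 - σr ^ 2 := by linarith
    rw [ha]; positivity
  have key : σr ^ 2 * a + σi ^ 2 = 2 * a := by
    have h2 : (2 - σr ^ 2) ≠ 0 := by linarith
    have h3 : (2 - σr ^ 2) * a = σi ^ 2 := by rw [ha]; field_simp
    linear_combination -h3
  -- main bounds on h₂ on [0, a]
  have hbound : ∀ x, 0 ≤ x → x ≤ a →
      (σr ^ 2 * x + σi ^ 2) / 2 ≤ h₂ x ∧ h₂ x ≤ a := by
    intro x hx0 hxa
    set u : ℝ := σr ^ 2 * x + σi ^ 2 with hu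
    have hu0 : 0 < u := by positivity
    have hu2a : u ≤ 2 * a := by
      rw [← key]; have : σr ^ 2 * x ≤ σr ^ 2 * a := by nlinarith
      linarith
    set s : ℝ := u / (2 * a) with hs
    have hs0 : 0 < s := by positivity
    have hs1 : s ≤ 1 := by rw [hs, div_le_one (by linarith)]; linarith
    set θ : ℝ := Real.arccos s with hθdef
    have hθ0 : 0 ≤ θ := Real.arccos_nonneg s
    have hθlt : θ < π / 2 := Real.arccos_lt_pi_div_two.2 hs0
    have hcos : Real.cos θ = s := Real.cos_arccos (by linarith) hs1
    have hkey1 : θ * Real.cos θ ≤ Real.sin θ := theta_cos_le_sin hθ0 hθlt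
    have hkey2 : Real.sin θ ≤ θ := Real.sin_le hθ0
    have hcos1 : Real.cos θ ≤ 1 := Real.cos_le_one θ
    have hcos0 : 0 ≤ Real.cos θ := by rw [hcos]; exact hs0.le
    have hus : u = 2 * a * Real.cos θ := by
      rw [hcos, hs]; field_simp
    have hsqrt : Real.sqrt ((2 * a) ^ 2 - u ^ 2) = 2 * a * Real.sin θ := by
      have h1 : (2 * a) ^ 2 - u ^ 2 = (2 * a) ^ 2 * (1 - s ^ 2) := by
        rw [hus, hcos]; ring
      rw [h1, Real.sqrt_mul (sq_nonneg _), Real.sqrt_sq (by linarith), hθdef,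
        ← Real.sin_arccos]
    have harccos : Real.arccos (-(u / (σr ^ 2 * a + σi ^ 2))) = π - θ := by
      rw [key, ← hs, Real.arccos_neg]
    have hform : h₂ x = a / π * (Real.cos θ * (π - θ) + Real.sin θ) := by
      rw [hdef x, ← hu, harccos, key, hsqrt, hus]
      field_simp
    have hB1 : π * Real.cos θ ≤ Real.cos θ * (π - θ) + Real.sin θ := by nlinarith
    have hB2 : Real.cos θ * (π - θ) + Real.sin θ ≤ π := by nlinarith
    constructor
    · rw [hform]
      have : u / 2 = a / π * (π * Real.cos θ) := by
        rw [hus]; field_simp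
      rw [hu] at this ⊢
      rw [this]
      exact mul_le_mul_of_nonneg_left hB1 (by positivity)
    · rw [hform]
      calc a / π * (Real.cos θ * (π - θ) + Real.sin θ) ≤ a / π * π :=
            mul_le_mul_of_nonneg_left hB2 (by positivity)
        _ = a := by field_simp
  -- h₂ x ≥ x on [0,a]
  have hge : ∀ x, 0 ≤ x → x ≤ a → x ≤ h₂ x := by
    intro x hx0 hxa
    have h1 := (hbound x hx0 hxa).1
    have h2 : (2 - σr ^ 2) * x ≤ σi ^ 2 := by
      nlinarith [mul_nonneg (by linarith : (0:ℝ) ≤ 2 - σr ^ 2) (by linarith : (0:ℝ) ≤ a - x)]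
    linarith
  -- invariance
  have hinv : ∀ t, 0 ≤ g t ∧ g t ≤ a := by
    intro t
    induction t with
    | zero => rw [hg0]; exact ⟨le_refl _, ha0.le⟩
    | succ n ih =>
      rw [hgs]
      refine ⟨?_, (hbound _ ih.1 ih.2).2⟩
      exact le_trans ih.1 (hge _ ih.1 ih.2)
  have hmono : Monotone g := by
    apply monotone_nat_of_le_succ
    intro t
    rw [hgs]
    exact hge _ (hinv t).1 (hinv t).2
  have hBdd : BddAbove (Set.range g) := ⟨a, by rintro y ⟨t, rfl⟩; exact (hinv t).2⟩
  have hconv : Tendsto g atTop (nhds (⨆ t, g t)) := tendsto_atTop_ciSup hmono hBdd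
  set L : ℝ := ⨆ t, g t with hL
  have hLa : L ≤ a := ciSup_le fun t => (hinv t).2
  have hL0 : 0 ≤ L := by
    have := le_ciSup hBdd 0
    rw [hg0] at this; exact this
  have hcont : Continuous h₂ := by
    have : h₂ = fun x => 1 / (2 * π) *
      ((σr ^ 2 * x + σi ^ 2) *
          Real.arccos (-((σr ^ 2 * x + σi ^ 2) / (σr ^ 2 * a + σi ^ 2))) +
        Real.sqrt ((σr ^ 2 * a + σi ^ 2) ^ 2 - (σr ^ 2 * x + σi ^ 2) ^ 2)) := funext hdef
    rw [this]
    have hc1 : Continuous (fun x : ℝ => σr ^ 2 * x + σi ^ 2) :=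
      (continuous_const.mul continuous_id).add continuous_const
    exact continuous_const.mul
      (((hc1.mul (Real.continuous_arccos.comp ((hc1.div_const _).neg))).add
        (Real.continuous_sqrt.comp (continuous_const.sub (hc1.pow 2)))))
  have hshift : Tendsto (fun t => g (t + 1)) atTop (nhds L) :=
    hconv.comp (tendsto_add_atTop_nat 1)
  have hshift2 : Tendsto (fun t => g (t + 1)) atTop (nhds (h₂ L)) := by
    have : (fun t => g (t + 1)) = h₂ ∘ g := by funext t; exact hgs t
    rw [this]
    exact (hcont.tendsto L).comp hconv
  have hfix : h₂ L = L := tendsto_nhds_unique hshift2 hshift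
  have hLeq : L = a := by
    have h1 := (hbound L hL0 hLa).1
    rw [hfix] at h1
    have h2 : σi ^ 2 ≤ (2 - σr ^ 2) * L := by linarith
    have h3 : a ≤ L := by
      have h4 : (2 - σr ^ 2) * a ≤ (2 - σr ^ 2) * L := by linarith [key, h2]
      exact le_of_mul_le_mul_left h4 (by linarith)
    linarith
  rw [hLeq] at hconv
  refine ⟨hmono, hconv, ?_⟩
  have : Tendsto (fun t => 2 * (a - g t)) atTop (nhds (2 * (a - a))) :=
    (tendsto_const_nhds.sub hconv).const_mul 2
  simpa using this
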